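/- For every infinite set X and every ordinal α with 0 < α < ℵ(X), one has ℵ(Inj(α, X)) = ℵ(X^α) and ℵ*(Inj(α, X)) = ℵ*(X^α), where Inj(α, X) is the set of injections from α into X and X^α the set of all functions from α to X. -/

import Mathlib

universe u

/-- The Hartogs number `ℵ(X)`: the least ordinal `α` such that there is no injection
from `α` into `X`. -/
noncomputable def hartogsOrd (X : Type u) : Ordinal.{u} :=
  sInf {α : Ordinal.{u} | ¬ ∃ f : α.ToType → X, Function.Injective f}

/-- The Lindenbaum number `ℵ*(X)`: the least ordinal `α` such that `|α| ≤* |X|` fails,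
i.e. such that `α ≠ 0` and there is no surjection from `X` onto `α`. -/
noncomputable def lindenbaumOrd (X : Type u) : Ordinal.{u} :=
  sInf {α : Ordinal.{u} | ¬ (α = 0 ∨ ∃ f : X → α.ToType, Function.Surjective f)}

lemma hartogsOrd_congr {A B : Type u} (e : A ≃ B) : hartogsOrd A = hartogsOrd B := by
  unfold hartogsOrd
  congr 1
  ext β
  simp only [Set.mem_setOf_eq, not_iff_not]
  constructor
  · rintro ⟨f, hf⟩
    exact ⟨e ∘ f, e.injective.comp hf⟩
  · rintro ⟨f, hf⟩
    exact ⟨e.symm ∘ f, e.symm.injective.comp hf⟩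

lemma lindenbaumOrd_congr {A B : Type u} (e : A ≃ B) : lindenbaumOrd A = lindenbaumOrd B := by
  unfold lindenbaumOrd
  congr 1
  ext β
  simp only [Set.mem_setOf_eq, not_iff_not]
  constructor
  · rintro (h | ⟨f, hf⟩)
    · exact Or.inl h
    · exact Or.inr ⟨f ∘ e.symm, hf.comp e.symm.surjective⟩
  · rintro (h | ⟨f, hf⟩)
    · exact Or.inl h
    · exact Or.inr ⟨f ∘ e, hf.comp e.surjective⟩

/-- For infinite `X` and `0 < α < ℵ(X)`, `ℵ(Inj(α,X)) = ℵ(X^α)` and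
`ℵ*(Inj(α,X)) = ℵ*(X^α)`. -/
theorem statement15 {X : Type u} (hX : Infinite X) (α : Ordinal.{u})
    (h0 : 0 < α) (hα : α < hartogsOrd X) :
    hartogsOrd {f : α.ToType → X // Function.Injective f} = hartogsOrd (α.ToType → X) ∧
    lindenbaumOrd {f : α.ToType → X // Function.Injective f} =
      lindenbaumOrd (α.ToType → X) := by
  -- α injects into X
  have hmem : α ∉ {β : Ordinal.{u} | ¬ ∃ f : β.ToType → X, Function.Injective f} := by
    intro h
    exact absurd (csInf_le' h) (not_le.2 hα)
  simp only [Set.mem_setOf_eq, not_not] at hmem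
  obtain ⟨j, hj⟩ := hmem
  have hne : Nonempty α.ToType := by
    rw [Ordinal.toType_nonempty_iff_ne_zero]
    exact h0.ne'
  -- X × α.ToType ≃ X
  have hcard : Cardinal.mk (X × α.ToType) = Cardinal.mk X := by
    have h1 : Cardinal.mk (X × α.ToType) = Cardinal.mk X * Cardinal.mk α.ToType := by
      simp [Cardinal.mk_prod]
    rw [h1]
    exact Cardinal.mul_eq_left (Cardinal.aleph0_le_mk X)
      (Cardinal.mk_le_of_injective hj) (Cardinal.mk_ne_zero _)
  obtain ⟨e⟩ := Cardinal.eq.mp hcard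
  -- embedding of X^α into the injections
  have hΦ : Function.Injective
      (fun f : α.ToType → X => (⟨fun ξ => e (f ξ, ξ), by
        intro a b hab
        have := e.injective hab
        exact (Prod.mk.injEq _ _ _ _ ▸ this).2⟩ :
        {f : α.ToType → X // Function.Injective f})) := by
    intro f g hfg
    funext ξ
    have : e (f ξ, ξ) = e (g ξ, ξ) := congrFun (congrArg Subtype.val hfg) ξ
    exact ((Prod.mk.injEq _ _ _ _ ▸ e.injective this)).1
  obtain ⟨eq⟩ := Function.Embedding.antisymm
    ⟨Subtype.val, Subtype.val_injective⟩ ⟨_, hΦ⟩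
  exact ⟨hartogsOrd_congr eq, lindenbaumOrd_congr eq⟩
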